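/- arXiv:2407.10212 — 4 statements merged into one kernel-verified Lean document; each statement's English description precedes it below -/
import Mathlib

section
/- Let L : V → W be a linear isomorphism. If G₂(v,v) ≥ G₁(v,v) for all v ∈ V, then ‖L‖_{tr,2} ≤ ‖L‖_{tr,1}. -/
open scoped RealInnerProductSpace

lemma exists_simul_basis {V : Type*} [AddCommGroup V] [Module ℝ V] [FiniteDimensional ℝ V]
    (G₁ G₂ : V →ₗ[ℝ] V →ₗ[ℝ] ℝ)
    (hG₁symm : ∀ x y : V, G₁ x y = G₁ y x)
    (hG₁pos : ∀ v : V, v ≠ 0 → 0 < G₁ v v)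
    (hG₂symm : ∀ x y : V, G₂ x y = G₂ y x) :
    ∃ (e : Module.Basis (Fin (Module.finrank ℝ V)) ℝ V) (μ : Fin (Module.finrank ℝ V) → ℝ),
      (∀ i j, G₁ (e i) (e j) = if i = j then 1 else 0) ∧
      (∀ i j, G₂ (e i) (e j) = if i = j then μ i else 0) := by
  classical
  set n := Module.finrank ℝ V with hn
  -- Step 1: an orthogonal basis for G₁
  have hsym : G₁.IsSymm := ⟨fun x y => hG₁symm x y⟩
  obtain ⟨v, hv⟩ := LinearMap.BilinForm.exists_orthogonal_basis hsym
  -- Step 2: normalize it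
  have hpos : ∀ i, 0 < G₁ (v i) (v i) := fun i => hG₁pos _ (v.ne_zero i)
  set c : Fin n → ℝ := fun i => (Real.sqrt (G₁ (v i) (v i)))⁻¹ with hc
  have hcpos : ∀ i, 0 < c i := fun i => inv_pos.2 (Real.sqrt_pos.2 (hpos i))
  set u : Fin n → ℝˣ := fun i => Units.mk0 (c i) (ne_of_gt (hcpos i)) with hu
  set e₀ : Module.Basis (Fin n) ℝ V := v.unitsSMul u with he₀
  have he₀app : ∀ i, e₀ i = c i • v i := fun i => v.unitsSMul_apply i
  have hone : ∀ i j, G₁ (e₀ i) (e₀ j) = if i = j then 1 else 0 := by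
    intro i j
    simp only [he₀app, map_smul, LinearMap.smul_apply, smul_eq_mul]
    by_cases h : i = j
    · subst h
      rw [if_pos rfl, hc]
      have h2 : Real.sqrt (G₁ (v i) (v i)) * Real.sqrt (G₁ (v i) (v i)) = G₁ (v i) (v i) :=
        Real.mul_self_sqrt (le_of_lt (hpos i))
      have h3 : Real.sqrt (G₁ (v i) (v i)) ≠ 0 := ne_of_gt (Real.sqrt_pos.2 (hpos i))
      rw [← h2]
      field_simp
    · rw [if_neg h, hv h]
      ring
  -- Step 3: transport to Euclidean space
  set b := EuclideanSpace.basisFun (Fin n) ℝ with hb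
  set T : EuclideanSpace ℝ (Fin n) ≃ₗ[ℝ] V := b.toBasis.equiv e₀ (Equiv.refl _) with hT
  have hTb : ∀ i, T (b i) = e₀ i := by
    intro i
    rw [hT]
    simpa using b.toBasis.equiv_apply i e₀ (Equiv.refl _)
  have hbil : G₁.compl₁₂ (T : EuclideanSpace ℝ (Fin n) →ₗ[ℝ] V)
      (T : EuclideanSpace ℝ (Fin n) →ₗ[ℝ] V) = innerₗ (EuclideanSpace ℝ (Fin n)) := by
    apply LinearMap.ext_basis (b₁ := b.toBasis) (b₂ := b.toBasis)
    intro i j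
    rw [LinearMap.compl₁₂_apply]
    simp only [OrthonormalBasis.coe_toBasis, LinearEquiv.coe_coe, innerₗ_apply_apply]
    rw [hTb, hTb, hone, orthonormal_iff_ite.mp b.orthonormal i j]
  have hT₁ : ∀ x y : EuclideanSpace ℝ (Fin n), G₁ (T x) (T y) = ⟪x, y⟫ := by
    intro x y
    have := LinearMap.congr_fun (LinearMap.congr_fun hbil x) y
    simpa using this
  set g : EuclideanSpace ℝ (Fin n) →ₗ[ℝ] EuclideanSpace ℝ (Fin n) →ₗ[ℝ] ℝ :=
    G₂.compl₁₂ (T : EuclideanSpace ℝ (Fin n) →ₗ[ℝ] V)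
      (T : EuclideanSpace ℝ (Fin n) →ₗ[ℝ] V) with hg
  have hgapp : ∀ x y, g x y = G₂ (T x) (T y) := fun x y => rfl
  -- the operator A
  set A : EuclideanSpace ℝ (Fin n) →ₗ[ℝ] EuclideanSpace ℝ (Fin n) :=
    (WithLp.linearEquiv 2 ℝ (Fin n → ℝ)).symm.toLinearMap ∘ₗ
      LinearMap.pi (fun i => g.flip (b i)) with hA
  have hAapp : ∀ x i, A x i = g x (b i) := fun x i => rfl
  have hsum : ∀ y : EuclideanSpace ℝ (Fin n), ∑ i, y i • b i = y := by
    intro y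
    ext j
    simp only [PiLp.smul_apply, smul_eq_mul]
    rw [WithLp.ofLp_sum, Finset.sum_apply]
    simp only [PiLp.smul_apply, hb, EuclideanSpace.basisFun_apply, EuclideanSpace.single_apply,
      smul_eq_mul, mul_ite, mul_one, mul_zero]
    simp [Finset.sum_ite_eq]
  have hAinner : ∀ x y : EuclideanSpace ℝ (Fin n), ⟪A x, y⟫ = g x y := by
    intro x y
    rw [PiLp.inner_apply]
    simp only [RCLike.inner_apply, conj_trivial]
    have : ∀ i, A x i * y i = g x (y i • b i) := by
      intro i
      rw [hAapp, map_smul]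
      simp [mul_comm]
    rw [Finset.sum_congr rfl fun i _ => (mul_comm (y i) (A x i)).trans (this i), ← map_sum, hsum]
  have hAsym : LinearMap.IsSymmetric A := by
    intro x y
    rw [hAinner, real_inner_comm, hAinner, hgapp, hgapp, hG₂symm]
  have hnE : Module.finrank ℝ (EuclideanSpace ℝ (Fin n)) = n := by
    simp [finrank_euclideanSpace]
  set f := hAsym.eigenvectorBasis hnE with hf
  set μ : Fin n → ℝ := hAsym.eigenvalues hnE with hμ
  have hAf : ∀ i, A (f i) = μ i • f i := by
    intro i
    have := hAsym.apply_eigenvectorBasis hnE i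
    simpa [hf, hμ] using this
  refine ⟨f.toBasis.map T, μ, ?_, ?_⟩
  · intro i j
    rw [Module.Basis.map_apply, Module.Basis.map_apply, OrthonormalBasis.coe_toBasis, hT₁,
      orthonormal_iff_ite.mp f.orthonormal i j]
  · intro i j
    rw [Module.Basis.map_apply, Module.Basis.map_apply, OrthonormalBasis.coe_toBasis, ← hgapp, ← hAinner,
      hAf, real_inner_smul_left, orthonormal_iff_ite.mp f.orthonormal i j]
    simp


def sgnReal (b : Bool) : ℝ := if b then 1 else -1

@[simp] lemma sgnReal_true : sgnReal true = 1 := rfl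
@[simp] lemma sgnReal_false : sgnReal false = -1 := rfl

lemma sgnReal_mul_self (b : Bool) : sgnReal b * sgnReal b = 1 := by cases b <;> simp [sgnReal]

lemma sum_lam_eq_one {n : ℕ} (γ : Fin n → ℝ) :
    ∑ ε : Fin n → Bool, ∏ i, (1 + sgnReal (ε i) * γ i)/2 = 1 := by
  classical
  rw [← Fintype.prod_sum (f := fun (i : Fin n) (b : Bool) => (1 + sgnReal b * γ i)/2)]
  have h : ∀ i : Fin n, (∑ b : Bool, (1 + sgnReal b * γ i)/2) = 1 := by
    intro i
    rw [Fintype.sum_bool]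
    simp only [sgnReal_true, sgnReal_false]
    ring
  rw [Finset.prod_congr rfl fun i _ => h i, Finset.prod_const_one]

lemma sum_lam_sgn {n : ℕ} (γ : Fin n → ℝ) (j : Fin n) :
    ∑ ε : Fin n → Bool, (∏ i, (1 + sgnReal (ε i) * γ i)/2) * sgnReal (ε j) = γ j := by
  classical
  have key : ∀ ε : Fin n → Bool,
      (∏ i, (1 + sgnReal (ε i) * γ i)/2) * sgnReal (ε j)
      = ∏ i, (if i = j then sgnReal (ε i) * ((1 + sgnReal (ε i) * γ i)/2)
              else (1 + sgnReal (ε i) * γ i)/2) := by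
    intro ε
    rw [← Finset.mul_prod_erase Finset.univ
      (fun i => (1 + sgnReal (ε i) * γ i)/2) (Finset.mem_univ j)]
    rw [← Finset.mul_prod_erase Finset.univ
      (fun i => if i = j then sgnReal (ε i) * ((1 + sgnReal (ε i) * γ i)/2)
        else (1 + sgnReal (ε i) * γ i)/2) (Finset.mem_univ j)]
    rw [if_pos rfl,
      Finset.prod_congr rfl (fun i hi => if_neg (Finset.ne_of_mem_erase hi))]
    ring
  rw [Finset.sum_congr rfl fun ε _ => key ε,
    ← Fintype.prod_sum (f := fun (i : Fin n) (b : Bool) =>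
      if i = j then sgnReal b * ((1 + sgnReal b * γ i)/2) else (1 + sgnReal b * γ i)/2)]
  have h : ∀ i : Fin n,
      (∑ b : Bool, if i = j then sgnReal b * ((1 + sgnReal b * γ i)/2)
        else (1 + sgnReal b * γ i)/2) = if i = j then γ j else 1 := by
    intro i
    by_cases h' : i = j
    · subst h'
      rw [if_pos rfl, Fintype.sum_bool, if_pos rfl, if_pos rfl]
      simp only [sgnReal_true, sgnReal_false]
      ring
    · rw [if_neg h', Fintype.sum_bool, if_neg h', if_neg h']
      simp only [sgnReal_true, sgnReal_false]
      ring
  rw [Finset.prod_congr rfl fun i _ => h i, Finset.prod_ite_eq']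
  simp

/-- Let `V` and `W` be finite-dimensional real vector spaces of the same
dimension, `W` equipped with an inner product and `V` equipped with two inner products
`G₁` and `G₂`.  For a linear isomorphism `L : V → W`, the trace norm
`‖L‖_{tr,i} = sup { tr(Q ∘ L) : Q : W → (V, Gᵢ) a linear isometry onto V }`.
If `G₂(v,v) ≥ G₁(v,v)` for all `v`, then `‖L‖_{tr,2} ≤ ‖L‖_{tr,1}`. -/
theorem traceNorm_le_of_inner_le
    {V W : Type*} [AddCommGroup V] [Module ℝ V] [FiniteDimensional ℝ V]
    [NormedAddCommGroup W] [InnerProductSpace ℝ W] [FiniteDimensional ℝ W]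
    (hdim : Module.finrank ℝ V = Module.finrank ℝ W)
    (G₁ G₂ : V →ₗ[ℝ] V →ₗ[ℝ] ℝ)
    (hG₁symm : ∀ x y : V, G₁ x y = G₁ y x)
    (hG₁pos : ∀ v : V, v ≠ 0 → 0 < G₁ v v)
    (hG₂symm : ∀ x y : V, G₂ x y = G₂ y x)
    (hG₂pos : ∀ v : V, v ≠ 0 → 0 < G₂ v v)
    (L : V ≃ₗ[ℝ] W)
    (hle : ∀ v : V, G₁ v v ≤ G₂ v v) :
    sSup {t : ℝ | ∃ Q : W →ₗ[ℝ] V, Function.Surjective Q ∧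
        (∀ x y : W, G₂ (Q x) (Q y) = ⟪x, y⟫) ∧
        t = LinearMap.trace ℝ V (Q ∘ₗ (L : V →ₗ[ℝ] W))} ≤
      sSup {t : ℝ | ∃ Q : W →ₗ[ℝ] V, Function.Surjective Q ∧
        (∀ x y : W, G₁ (Q x) (Q y) = ⟪x, y⟫) ∧
        t = LinearMap.trace ℝ V (Q ∘ₗ (L : V →ₗ[ℝ] W))} := by
  classical
  obtain ⟨e, μ, he₁, he₂⟩ := exists_simul_basis G₁ G₂ hG₁symm hG₁pos hG₂symm
  set S₁ := {t : ℝ | ∃ Q : W →ₗ[ℝ] V, Function.Surjective Q ∧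
        (∀ x y : W, G₁ (Q x) (Q y) = ⟪x, y⟫) ∧
        t = LinearMap.trace ℝ V (Q ∘ₗ (L : V →ₗ[ℝ] W))} with hS₁
  -- basic facts about μ
  have hμ1 : ∀ i, 1 ≤ μ i := by
    intro i
    have h1 := he₁ i i
    have h2 := he₂ i i
    rw [if_pos rfl] at h1 h2
    have := hle (e i)
    rw [h1, h2] at this
    exact this
  have hμpos : ∀ i, 0 < μ i := fun i => lt_of_lt_of_le one_pos (hμ1 i)
  have hsq1 : ∀ i, 1 ≤ Real.sqrt (μ i) := fun i => by
    rw [show (1:ℝ) = Real.sqrt 1 by simp]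
    exact Real.sqrt_le_sqrt (hμ1 i)
  have hsqpos : ∀ i, 0 < Real.sqrt (μ i) := fun i => lt_of_lt_of_le one_pos (hsq1 i)
  set γ : Fin (Module.finrank ℝ V) → ℝ := fun i => (Real.sqrt (μ i))⁻¹ with hγ
  have hγpos : ∀ i, 0 < γ i := fun i => inv_pos.2 (hsqpos i)
  have hγ1 : ∀ i, γ i ≤ 1 := fun i => inv_le_one_of_one_le₀ (hsq1 i)
  -- coordinates via G₁
  have hrepr : ∀ (u : V) (i), G₁ u (e i) = e.repr u i := by
    intro u i
    conv_lhs => rw [← e.sum_repr u]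
    rw [map_sum, LinearMap.sum_apply]
    simp only [map_smul, LinearMap.smul_apply, smul_eq_mul, he₁, mul_ite, mul_one, mul_zero]
    simp [Finset.sum_ite_eq']
  have hGuu : ∀ u : V, G₁ u u = ∑ i, (e.repr u i)^2 := by
    intro u
    have hu : u = ∑ i, e.repr u i • e i := (e.sum_repr u).symm
    nth_rewrite 2 [hu]
    rw [map_sum]
    simp only [map_smul, smul_eq_mul, hrepr]
    simp [sq]
  -- trace via G₁-orthonormal basis
  have htr : ∀ (F : V →ₗ[ℝ] V), LinearMap.trace ℝ V F = ∑ i, G₁ (F (e i)) (e i) := by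
    intro F
    rw [LinearMap.trace_eq_matrix_trace ℝ e F, Matrix.trace]
    simp [Matrix.diag, LinearMap.toMatrix_apply, hrepr]
  -- Cauchy-Schwarz-type bound
  have hCS : ∀ (u : V) (i), G₁ u (e i) ≤ Real.sqrt (G₁ u u) := by
    intro u i
    rw [hrepr, hGuu]
    have h1 : (e.repr u i)^2 ≤ ∑ j, (e.repr u j)^2 :=
      Finset.single_le_sum (f := fun j => (e.repr u j)^2)
        (fun j _ => sq_nonneg _) (Finset.mem_univ i)
    calc e.repr u i ≤ |e.repr u i| := le_abs_self _
      _ = Real.sqrt ((e.repr u i)^2) := (Real.sqrt_sq_eq_abs _).symm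
      _ ≤ _ := Real.sqrt_le_sqrt h1
  -- S₁ is bounded above
  have hbdd : BddAbove S₁ := by
    refine ⟨∑ i, ‖L (e i)‖, ?_⟩
    rintro t ⟨Q, hsurj, hiso, rfl⟩
    rw [htr]
    apply Finset.sum_le_sum
    intro i _
    simp only [LinearMap.comp_apply, LinearEquiv.coe_coe]
    refine (hCS _ i).trans ?_
    rw [hiso, real_inner_self_eq_norm_sq, Real.sqrt_sq (norm_nonneg _)]
  -- a G₁-isometry W → V, to show sSup S₁ ≥ 0
  have h0 : 0 ≤ sSup S₁ := by
    set w := (stdOrthonormalBasis ℝ W).reindex (finCongr hdim.symm) with hw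
    set Q₀ : W →ₗ[ℝ] V := (w.toBasis.equiv e (Equiv.refl _)).toLinearMap with hQ₀
    have hQ₀b : ∀ i, Q₀ (w i) = e i := by
      intro i
      rw [hQ₀]
      simpa using w.toBasis.equiv_apply i e (Equiv.refl _)
    have hQ₀iso : ∀ x y : W, G₁ (Q₀ x) (Q₀ y) = ⟪x, y⟫ := by
      have hbil : G₁.compl₁₂ Q₀ Q₀ = innerₗ W := by
        apply LinearMap.ext_basis (b₁ := w.toBasis) (b₂ := w.toBasis)
        intro i j
        rw [LinearMap.compl₁₂_apply]
        simp only [OrthonormalBasis.coe_toBasis, innerₗ_apply_apply]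
        rw [hQ₀b, hQ₀b, he₁, orthonormal_iff_ite.mp w.orthonormal i j]
      intro x y
      have := LinearMap.congr_fun (LinearMap.congr_fun hbil x) y
      simpa using this
    have hQS : Function.Surjective Q₀ := (w.toBasis.equiv e (Equiv.refl _)).surjective
    have ht₀ : LinearMap.trace ℝ V (Q₀ ∘ₗ (L : V →ₗ[ℝ] W)) ∈ S₁ :=
      ⟨Q₀, hQS, hQ₀iso, rfl⟩
    have htneg : -LinearMap.trace ℝ V (Q₀ ∘ₗ (L : V →ₗ[ℝ] W)) ∈ S₁ := by
      refine ⟨-Q₀, ?_, ?_, ?_⟩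
      · intro v
        obtain ⟨x, hx⟩ := hQS v
        exact ⟨-x, by simp [hx]⟩
      · intro x y
        simp only [LinearMap.neg_apply, map_neg, LinearMap.neg_apply, neg_neg]
        exact hQ₀iso x y
      · rw [LinearMap.neg_comp, map_neg]
    have a1 := le_csSup hbdd ht₀
    have a2 := le_csSup hbdd htneg
    linarith
  -- main estimate
  apply Real.sSup_le _ h0
  rintro t ⟨Q, hQsurj, hQiso, rfl⟩
  set lam : (Fin (Module.finrank ℝ V) → Bool) → ℝ :=
    fun ε => ∏ i, (1 + sgnReal (ε i) * γ i)/2 with hlam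
  have hlam0 : ∀ ε, 0 ≤ lam ε := by
    intro ε
    apply Finset.prod_nonneg
    intro i _
    have h1 := hγpos i
    have h2 := hγ1 i
    cases hεi : ε i <;> simp only [sgnReal_true, sgnReal_false] <;> nlinarith
  have hlamsum : ∑ ε : Fin (Module.finrank ℝ V) → Bool, lam ε = 1 := sum_lam_eq_one γ
  have hlamsgn : ∀ j, ∑ ε : Fin (Module.finrank ℝ V) → Bool, lam ε * sgnReal (ε j) = γ j :=
    sum_lam_sgn γ
  -- the signed dilation operators
  set D : (Fin (Module.finrank ℝ V) → Bool) → (V →ₗ[ℝ] V) :=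
    fun ε => e.constr ℝ (fun i => (sgnReal (ε i) * Real.sqrt (μ i)) • e i) with hD
  have hDb : ∀ ε i, D ε (e i) = (sgnReal (ε i) * Real.sqrt (μ i)) • e i := by
    intro ε i
    rw [hD]
    exact e.constr_basis ℝ _ i
  have hDsurj : ∀ ε, Function.Surjective (D ε) := by
    intro ε
    set Dinv : V →ₗ[ℝ] V := e.constr ℝ (fun i => (sgnReal (ε i) * γ i) • e i) with hDinv
    have hcomp : (D ε) ∘ₗ Dinv = LinearMap.id := by
      apply e.ext
      intro i
      simp only [LinearMap.comp_apply, LinearMap.id_apply]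
      rw [hDinv, e.constr_basis, map_smul, hDb, smul_smul]
      rw [show sgnReal (ε i) * γ i * (sgnReal (ε i) * Real.sqrt (μ i))
          = (sgnReal (ε i) * sgnReal (ε i)) * (γ i * Real.sqrt (μ i)) by ring,
        sgnReal_mul_self, hγ]
      rw [show ((fun i => (Real.sqrt (μ i))⁻¹) i * Real.sqrt (μ i)) =
        (Real.sqrt (μ i))⁻¹ * Real.sqrt (μ i) by rfl]
      rw [inv_mul_cancel₀ (ne_of_gt (hsqpos i))]
      simp
    intro v
    exact ⟨Dinv v, by rw [← LinearMap.comp_apply, hcomp]; rfl⟩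
  have hDiso : ∀ ε (a b : V), G₁ (D ε a) (D ε b) = G₂ a b := by
    intro ε
    have hbil : G₁.compl₁₂ (D ε) (D ε) = G₂ := by
      apply LinearMap.ext_basis (b₁ := e) (b₂ := e)
      intro i j
      rw [LinearMap.compl₁₂_apply, hDb, hDb]
      simp only [map_smul, LinearMap.smul_apply, smul_eq_mul, he₁ i j, he₂ i j]
      by_cases h : i = j
      · subst h
        rw [if_pos rfl, if_pos rfl]
        have h1 := sgnReal_mul_self (ε i)
        have h2 : Real.sqrt (μ i) * Real.sqrt (μ i) = μ i :=
          Real.mul_self_sqrt (le_of_lt (hμpos i))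
        nlinarith [h1, h2]
      · rw [if_neg h, if_neg h]
        ring
    intro a b
    have := LinearMap.congr_fun (LinearMap.congr_fun hbil a) b
    simpa using this
  -- the convex decomposition of the identity
  have hid : (∑ ε : Fin (Module.finrank ℝ V) → Bool, lam ε • D ε) = LinearMap.id := by
    apply e.ext
    intro i
    simp only [LinearMap.sum_apply, LinearMap.smul_apply, hDb, LinearMap.id_apply]
    rw [show (∑ ε : Fin (Module.finrank ℝ V) → Bool,
          lam ε • (sgnReal (ε i) * Real.sqrt (μ i)) • e i)
        = (∑ ε : Fin (Module.finrank ℝ V) → Bool,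
          lam ε * sgnReal (ε i) * Real.sqrt (μ i)) • e i by
      rw [Finset.sum_smul]
      exact Finset.sum_congr rfl fun ε _ => by rw [smul_smul]; ring_nf]
    rw [show (∑ ε : Fin (Module.finrank ℝ V) → Bool,
        lam ε * sgnReal (ε i) * Real.sqrt (μ i))
        = (∑ ε : Fin (Module.finrank ℝ V) → Bool,
        lam ε * sgnReal (ε i)) * Real.sqrt (μ i) by rw [Finset.sum_mul]]
    rw [hlamsgn i]
    rw [show γ i * Real.sqrt (μ i) = (Real.sqrt (μ i))⁻¹ * Real.sqrt (μ i) by rfl]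
    rw [inv_mul_cancel₀ (ne_of_gt (hsqpos i)), one_smul]
  -- each D ε ∘ Q gives an element of S₁
  have hmem : ∀ ε : Fin (Module.finrank ℝ V) → Bool,
      LinearMap.trace ℝ V ((D ε ∘ₗ Q) ∘ₗ (L : V →ₗ[ℝ] W)) ∈ S₁ := by
    intro ε
    refine ⟨D ε ∘ₗ Q, (hDsurj ε).comp hQsurj, ?_, rfl⟩
    intro x y
    simp only [LinearMap.comp_apply]
    rw [hDiso, hQiso]
  have hle' : ∀ ε : Fin (Module.finrank ℝ V) → Bool,
      LinearMap.trace ℝ V ((D ε ∘ₗ Q) ∘ₗ (L : V →ₗ[ℝ] W)) ≤ sSup S₁ :=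
    fun ε => le_csSup hbdd (hmem ε)
  -- decomposition of Q ∘ L
  have hdecomp : (∑ ε : Fin (Module.finrank ℝ V) → Bool,
      lam ε • ((D ε ∘ₗ Q) ∘ₗ (L : V →ₗ[ℝ] W))) = Q ∘ₗ (L : V →ₗ[ℝ] W) := by
    apply LinearMap.ext
    intro x
    have h := LinearMap.congr_fun hid (Q (L x))
    simp only [LinearMap.sum_apply, LinearMap.smul_apply, LinearMap.comp_apply,
      LinearMap.id_apply, LinearEquiv.coe_coe] at h ⊢
    exact h
  calc LinearMap.trace ℝ V (Q ∘ₗ (L : V →ₗ[ℝ] W))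
      = ∑ ε : Fin (Module.finrank ℝ V) → Bool,
          lam ε * LinearMap.trace ℝ V ((D ε ∘ₗ Q) ∘ₗ (L : V →ₗ[ℝ] W)) := by
        rw [← hdecomp, map_sum]
        exact Finset.sum_congr rfl fun ε _ => by rw [map_smul]; rfl
    _ ≤ ∑ ε : Fin (Module.finrank ℝ V) → Bool, lam ε * sSup S₁ :=
        Finset.sum_le_sum fun ε _ => mul_le_mul_of_nonneg_left (hle' ε) (hlam0 ε)
    _ = sSup S₁ := by rw [← Finset.sum_mul, hlamsum, one_mul]
end

section
/- Let L : V → W be a linear isomorphism and suppose G₂(v,v) ≥ G₁(v,v) for all v ∈ V. Then ‖L‖_{tr,2} = ‖L‖_{tr,1} if and only if G₁ = G₂. -/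
open scoped RealInnerProductSpace
open Module LinearMap


set_option maxHeartbeats 1000000 in
lemma traceNorm_aux {E W : Type*} [NormedAddCommGroup E] [InnerProductSpace ℝ E]
    [FiniteDimensional ℝ E] [NormedAddCommGroup W] [InnerProductSpace ℝ W]
    [FiniteDimensional ℝ W] (hdim : finrank ℝ E = finrank ℝ W) (L : E ≃ₗ[ℝ] W) :
    ∃ S : ℝ, ∃ Q₀ : W →ₗ[ℝ] E, Function.Injective Q₀ ∧ (∀ x y : W, ⟪Q₀ x, Q₀ y⟫ = ⟪x, y⟫) ∧
      S = trace ℝ E (Q₀ ∘ₗ (L : E →ₗ[ℝ] W)) ∧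
      (∀ C : W →ₗ[ℝ] E, (∀ x : W, ⟪C x, C x⟫ ≤ ⟪x, x⟫) →
        trace ℝ E (C ∘ₗ (L : E →ₗ[ℝ] W)) ≤ S ∧
        (trace ℝ E (C ∘ₗ (L : E →ₗ[ℝ] W)) = S → ∀ x y : W, ⟪C x, C y⟫ = ⟪x, y⟫)) := by
  classical
  rcases Nat.eq_zero_or_pos (finrank ℝ E) with h0 | hpos
  · -- trivial case: E and W are zero-dimensional
    have hE : Subsingleton E := finrank_zero_iff.mp h0
    have hW : Subsingleton W := finrank_zero_iff.mp (hdim ▸ h0)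
    refine ⟨0, 0, ?_, ?_, ?_, ?_⟩
    · intro x y _; exact Subsingleton.elim x y
    · intro x y
      rw [Subsingleton.elim x 0, Subsingleton.elim y 0]
      simp
    · have : (0 : W →ₗ[ℝ] E) ∘ₗ (L : E →ₗ[ℝ] W) = 0 := by ext x; simp
      rw [this, map_zero]
    · intro C hC
      have hC0 : C ∘ₗ (L : E →ₗ[ℝ] W) = 0 := Subsingleton.elim _ _
      constructor
      · rw [hC0, map_zero]
      · intro _ x y
        rw [Subsingleton.elim x 0, Subsingleton.elim y 0]
        simp
  · set n := finrank ℝ E with hn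
    have hne : Nonempty (Fin n) := ⟨⟨0, hpos⟩⟩
    set L' : E →ₗ[ℝ] W := (L : E →ₗ[ℝ] W) with hL'
    set T : E →ₗ[ℝ] E := adjoint L' ∘ₗ L' with hT'
    have hT : T.IsSymmetric := by
      intro x y
      simp only [hT', comp_apply, adjoint_inner_left, adjoint_inner_right]
    set v : OrthonormalBasis (Fin n) ℝ E := hT.eigenvectorBasis rfl with hv
    set μ : Fin n → ℝ := hT.eigenvalues rfl with hμ
    have hkey : ∀ i j, ⟪L' (v i), L' (v j)⟫ = μ i * ⟪v i, v j⟫ := by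
      intro i j
      have h1 : ⟪L' (v i), L' (v j)⟫ = ⟪T (v i), v j⟫ := by
        rw [hT', comp_apply, adjoint_inner_left]
      rw [h1, hT.apply_eigenvectorBasis rfl i]
      simp [real_inner_smul_left]
      rfl
    have hvnorm : ∀ i, ⟪v i, v i⟫ = 1 := fun i => by
      rw [real_inner_self_eq_norm_mul_norm, v.orthonormal.1 i, mul_one]
    have hμpos : ∀ i, 0 < μ i := by
      intro i
      have h1 : ⟪L' (v i), L' (v i)⟫ = μ i := by rw [hkey i i, hvnorm i, mul_one]
      have h2 : L' (v i) ≠ 0 := by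
        intro h
        exact v.toBasis.ne_zero i (L.injective (by simpa [hL'] using h))
      have h3 : 0 < ‖L' (v i)‖ := norm_pos_iff.mpr h2
      have h4 : ⟪L' (v i), L' (v i)⟫ = ‖L' (v i)‖ * ‖L' (v i)‖ :=
        real_inner_self_eq_norm_mul_norm _
      nlinarith
    set σ : Fin n → ℝ := fun i => Real.sqrt (μ i) with hσ
    have hσpos : ∀ i, 0 < σ i := fun i => Real.sqrt_pos.mpr (hμpos i)
    have hσsq : ∀ i, σ i * σ i = μ i := fun i => Real.mul_self_sqrt (hμpos i).le
    set w : Fin n → W := fun i => (σ i)⁻¹ • L' (v i) with hw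
    have hLv : ∀ i, L' (v i) = σ i • w i := by
      intro i
      rw [hw]
      rw [smul_smul, mul_inv_cancel₀ (hσpos i).ne', one_smul]
    have hworth : Orthonormal ℝ w := by
      rw [orthonormal_iff_ite]
      intro i j
      have : ⟪w i, w j⟫ = (σ i)⁻¹ * ((σ j)⁻¹ * (μ i * ⟪v i, v j⟫)) := by
        rw [hw]
        rw [real_inner_smul_left, real_inner_smul_right, hkey]
      rw [this]
      rcases eq_or_ne i j with rfl | hij
      · rw [hvnorm i]
        simp only [if_pos rfl]
        rw [mul_one, ← mul_assoc, ← mul_inv_rev, hσsq i]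
        exact inv_mul_cancel₀ (hμpos i).ne'
      · have : ⟪v i, v j⟫ = 0 := by
          have := orthonormal_iff_ite.mp v.orthonormal i j
          simpa [hij] using this
        simp [this, hij]
    have hcard : Fintype.card (Fin n) = finrank ℝ W := by simpa using hdim
    set wbB := basisOfLinearIndependentOfCardEqFinrank hworth.linearIndependent hcard with hwbB
    have hwbB_coe : ⇑wbB = w := coe_basisOfLinearIndependentOfCardEqFinrank _ _
    set wb : OrthonormalBasis (Fin n) ℝ W := wbB.toOrthonormalBasis (by rwa [hwbB_coe]) with hwb
    have hwb_coe : ∀ i, wb i = w i := by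
      intro i
      rw [hwb, Basis.coe_toOrthonormalBasis, hwbB_coe]
    set Q₀iso : W ≃ₗᵢ[ℝ] E := wb.repr.trans v.repr.symm with hQ₀iso
    set Q₀ : W →ₗ[ℝ] E := Q₀iso.toLinearEquiv.toLinearMap with hQ₀
    have hQ₀w : ∀ i, Q₀ (w i) = v i := by
      intro i
      have : Q₀ (w i) = v.repr.symm (wb.repr (wb i)) := by rw [hwb_coe]; rfl
      rw [this, OrthonormalBasis.repr_self, OrthonormalBasis.repr_symm_single]
    have hQ₀inner : ∀ x y : W, ⟪Q₀ x, Q₀ y⟫ = ⟪x, y⟫ := fun x y =>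
      Q₀iso.inner_map_map x y
    -- trace formula
    have htr : ∀ M : E →ₗ[ℝ] E, trace ℝ E M = ∑ i, ⟪v i, M (v i)⟫ := by
      intro M
      rw [trace_eq_matrix_trace ℝ v.toBasis, Matrix.trace]
      congr 1
      ext i
      rw [Matrix.diag_apply, LinearMap.toMatrix_apply, v.coe_toBasis_repr_apply,
        v.repr_apply_apply, v.coe_toBasis]
    have htrC : ∀ C : W →ₗ[ℝ] E,
        trace ℝ E (C ∘ₗ L') = ∑ i, σ i * ⟪v i, C (w i)⟫ := by
      intro C
      rw [htr]
      congr 1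
      ext i
      rw [comp_apply, hLv i, map_smul, real_inner_smul_right]
    set S : ℝ := ∑ i, σ i with hS
    have hwnorm : ∀ i, ‖w i‖ = 1 := fun i => hworth.1 i
    -- upper bound for contractions
    have hub : ∀ C : W →ₗ[ℝ] E, (∀ x : W, ⟪C x, C x⟫ ≤ ⟪x, x⟫) →
        ∀ i, ⟪v i, C (w i)⟫ ≤ 1 := by
      intro C hC i
      have hnorm : ‖C (w i)‖ ≤ 1 := by
        have h1 := hC (w i)
        rw [real_inner_self_eq_norm_sq, real_inner_self_eq_norm_sq, hwnorm i] at h1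
        nlinarith [norm_nonneg (C (w i))]
      calc ⟪v i, C (w i)⟫ ≤ ‖v i‖ * ‖C (w i)‖ := real_inner_le_norm _ _
        _ ≤ 1 := by rw [v.orthonormal.1 i, one_mul]; exact hnorm
    refine ⟨S, Q₀, Q₀iso.injective, hQ₀inner, ?_, ?_⟩
    · rw [htrC Q₀, hS]
      congr 1
      ext i
      rw [hQ₀w i, hvnorm i, mul_one]
    · intro C hC
      have hterm : ∀ i, σ i * ⟪v i, C (w i)⟫ ≤ σ i := by
        intro i
        have := hub C hC i
        nlinarith [hσpos i]
      have hle : trace ℝ E (C ∘ₗ (L : E →ₗ[ℝ] W)) ≤ S := by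
        rw [htrC C, hS]
        exact Finset.sum_le_sum fun i _ => hterm i
      refine ⟨hle, ?_⟩
      intro heq
      -- equality forces C (w i) = v i for all i
      have hzero : ∀ i ∈ Finset.univ, σ i - σ i * ⟪v i, C (w i)⟫ = 0 := by
        have hsum : ∑ i, (σ i - σ i * ⟪v i, C (w i)⟫) = 0 := by
          rw [Finset.sum_sub_distrib, ← htrC C, heq, ← hS, sub_self]
        exact (Finset.sum_eq_zero_iff_of_nonneg
          (fun i _ => by have := hterm i; linarith)).mp hsum
      have hCw : ∀ i, C (w i) = v i := by
        intro i
        have h1 : ⟪v i, C (w i)⟫ = 1 := by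
          have h0 := hzero i (Finset.mem_univ i)
          have h2 := hσpos i
          have h3 : σ i * (1 - ⟪v i, C (w i)⟫) = 0 := by nlinarith [h0]
          rcases mul_eq_zero.mp h3 with h | h
          · exact absurd h h2.ne'
          · linarith
        have hnorm : ‖C (w i)‖ ≤ 1 := by
          have h1 := hC (w i)
          rw [real_inner_self_eq_norm_sq, real_inner_self_eq_norm_sq, hwnorm i] at h1
          nlinarith [norm_nonneg (C (w i))]
        have hsub : ‖C (w i) - v i‖ ^ 2 ≤ 0 := by
          rw [norm_sub_sq_real, real_inner_comm, h1, v.orthonormal.1 i]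
          nlinarith [norm_nonneg (C (w i))]
        have h4 : C (w i) - v i = 0 := by
          have h5 := norm_nonneg (C (w i) - v i)
          have h3 : ‖C (w i) - v i‖ = 0 := by nlinarith
          exact norm_eq_zero.mp h3
        exact sub_eq_zero.mp h4
      have hCQ : C = Q₀ := by
        apply wbB.ext
        intro i
        rw [hwbB_coe, hCw i, hQ₀w i]
      intro x y
      rw [hCQ]
      exact hQ₀inner x y


noncomputable def coreOfBilin {V : Type*} [AddCommGroup V] [Module ℝ V]
    (G : V →ₗ[ℝ] V →ₗ[ℝ] ℝ) (hs : ∀ x y : V, G x y = G y x)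
    (hp : ∀ v : V, v ≠ 0 → 0 < G v v) : InnerProductSpace.Core ℝ V where
  inner x y := G x y
  conj_inner_symm x y := by simpa using hs y x
  re_inner_nonneg x := by
    rcases eq_or_ne x 0 with rfl | h
    · simp
    · simpa using (hp x h).le
  add_left x y z := by simp [map_add]
  smul_left x y r := by simp
  definite x hx := by
    by_contra h
    exact (hp x h).ne' (by simpa using hx)

lemma key_lemma {V W : Type*} [AddCommGroup V] [Module ℝ V] [FiniteDimensional ℝ V]
    [NormedAddCommGroup W] [InnerProductSpace ℝ W] [FiniteDimensional ℝ W]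
    (hdim : finrank ℝ V = finrank ℝ W)
    (G : V →ₗ[ℝ] V →ₗ[ℝ] ℝ) (hs : ∀ x y : V, G x y = G y x)
    (hp : ∀ v : V, v ≠ 0 → 0 < G v v) (L : V ≃ₗ[ℝ] W) :
    ∃ S : ℝ, ∃ Q₀ : W →ₗ[ℝ] V, Function.Surjective Q₀ ∧
      (∀ x y : W, G (Q₀ x) (Q₀ y) = ⟪x, y⟫) ∧
      S = trace ℝ V (Q₀ ∘ₗ (L : V →ₗ[ℝ] W)) ∧
      ∀ C : W →ₗ[ℝ] V, (∀ x : W, G (C x) (C x) ≤ ⟪x, x⟫) →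
        trace ℝ V (C ∘ₗ (L : V →ₗ[ℝ] W)) ≤ S ∧
        (trace ℝ V (C ∘ₗ (L : V →ₗ[ℝ] W)) = S → ∀ x y : W, G (C x) (C y) = ⟪x, y⟫) := by
  letI c := coreOfBilin G hs hp
  letI : NormedAddCommGroup V := c.toNormedAddCommGroup
  letI : InnerProductSpace ℝ V := InnerProductSpace.ofCore c.toCore
  obtain ⟨S, Q₀, hinj, hiso, hSeq, hmax⟩ := traceNorm_aux hdim L
  refine ⟨S, Q₀, ?_, hiso, hSeq, hmax⟩
  exact (LinearMap.injective_iff_surjective_of_finrank_eq_finrank hdim.symm).mp hinj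


/-- With `V, W` finite-dimensional real vector spaces of the same dimension,
`W` carrying an inner product and `V` two inner products `G₁, G₂`, and `L : V → W` a linear
isomorphism with `G₂(v,v) ≥ G₁(v,v)` for all `v`: the trace norms satisfy
`‖L‖_{tr,2} = ‖L‖_{tr,1}` if and only if `G₁ = G₂`. -/
theorem traceNorm_eq_iff_inner_eq
    {V W : Type*} [AddCommGroup V] [Module ℝ V] [FiniteDimensional ℝ V]
    [NormedAddCommGroup W] [InnerProductSpace ℝ W] [FiniteDimensional ℝ W]
    (hdim : Module.finrank ℝ V = Module.finrank ℝ W)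
    (G₁ G₂ : V →ₗ[ℝ] V →ₗ[ℝ] ℝ)
    (hG₁symm : ∀ x y : V, G₁ x y = G₁ y x)
    (hG₁pos : ∀ v : V, v ≠ 0 → 0 < G₁ v v)
    (hG₂symm : ∀ x y : V, G₂ x y = G₂ y x)
    (hG₂pos : ∀ v : V, v ≠ 0 → 0 < G₂ v v)
    (L : V ≃ₗ[ℝ] W)
    (hle : ∀ v : V, G₁ v v ≤ G₂ v v) :
    (sSup {t : ℝ | ∃ Q : W →ₗ[ℝ] V, Function.Surjective Q ∧
        (∀ x y : W, G₂ (Q x) (Q y) = ⟪x, y⟫) ∧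
        t = LinearMap.trace ℝ V (Q ∘ₗ (L : V →ₗ[ℝ] W))} =
      sSup {t : ℝ | ∃ Q : W →ₗ[ℝ] V, Function.Surjective Q ∧
        (∀ x y : W, G₁ (Q x) (Q y) = ⟪x, y⟫) ∧
        t = LinearMap.trace ℝ V (Q ∘ₗ (L : V →ₗ[ℝ] W))}) ↔ G₁ = G₂ := by
  constructor
  · intro hsup
    obtain ⟨S₁, Q₁, hQ₁s, hQ₁i, hS₁, hm₁⟩ := key_lemma hdim G₁ hG₁symm hG₁pos L
    obtain ⟨S₂, Q₂, hQ₂s, hQ₂i, hS₂, hm₂⟩ := key_lemma hdim G₂ hG₂symm hG₂pos L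
    have hset₁ : sSup {t : ℝ | ∃ Q : W →ₗ[ℝ] V, Function.Surjective Q ∧
        (∀ x y : W, G₁ (Q x) (Q y) = ⟪x, y⟫) ∧
        t = LinearMap.trace ℝ V (Q ∘ₗ (L : V →ₗ[ℝ] W))} = S₁ := by
      apply IsGreatest.csSup_eq
      refine ⟨⟨Q₁, hQ₁s, hQ₁i, hS₁⟩, ?_⟩
      rintro t ⟨Q, hQs, hQi, rfl⟩
      exact (hm₁ Q (fun x => le_of_eq (hQi x x))).1
    have hset₂ : sSup {t : ℝ | ∃ Q : W →ₗ[ℝ] V, Function.Surjective Q ∧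
        (∀ x y : W, G₂ (Q x) (Q y) = ⟪x, y⟫) ∧
        t = LinearMap.trace ℝ V (Q ∘ₗ (L : V →ₗ[ℝ] W))} = S₂ := by
      apply IsGreatest.csSup_eq
      refine ⟨⟨Q₂, hQ₂s, hQ₂i, hS₂⟩, ?_⟩
      rintro t ⟨Q, hQs, hQi, rfl⟩
      exact (hm₂ Q (fun x => le_of_eq (hQi x x))).1
    have hS : S₂ = S₁ := by rw [← hset₁, ← hset₂, hsup]
    have hcontr : ∀ x : W, G₁ (Q₂ x) (Q₂ x) ≤ ⟪x, x⟫ := fun x => by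
      rw [← hQ₂i x x]; exact hle (Q₂ x)
    have heq := (hm₁ Q₂ hcontr).2 (by rw [← hS₂, hS])
    ext u w'
    obtain ⟨x, rfl⟩ := hQ₂s u
    obtain ⟨y, rfl⟩ := hQ₂s w'
    rw [heq x y]
    exact (hQ₂i x y).symm
  · rintro rfl
    rfl
end

section
/- For every real n×n matrix A, the supremum of tr(Q·A) over all Q in O(n) equals the sum of the singular values of A, i.e. sup_{Q ∈ O(n)} tr(Q·A) = tr((Aᵀ·A)^{1/2}), where (Aᵀ·A)^{1/2} denotes the positive semidefinite square root of the positive semidefinite matrix Aᵀ·A. -/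
open Matrix

open scoped ComplexOrder in
/-- The positive semidefinite square root of a positive semidefinite matrix, as defined in
Mathlib of December 2024 (removed since). -/
noncomputable def Matrix.PosSemidef.sqrt {𝕜 : Type*} [RCLike 𝕜] {n : Type*} [Fintype n]
    [DecidableEq n] {A : Matrix n n 𝕜} (hA : A.PosSemidef) : Matrix n n 𝕜 :=
  (hA.1.eigenvectorUnitary : Matrix n n 𝕜) *
    diagonal (fun i => ((Real.sqrt (hA.1.eigenvalues i) : ℝ) : 𝕜)) *
    (star hA.1.eigenvectorUnitary : Matrix n n 𝕜)

/-- For every real `n × n` matrix `A`, the supremum of `tr (Q * A)` over all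
orthogonal matrices `Q` (i.e. `Qᵀ * Q = 1`) equals the sum of the singular values of `A`,
namely `tr ((Aᵀ * A) ^ (1/2))`, where the positive semidefinite square root of the positive
semidefinite matrix `Aᵀ * A` is used. -/
theorem sup_trace_orthogonal_mul_eq_traceNorm
    (n : ℕ) (A : Matrix (Fin n) (Fin n) ℝ)
    (hA : (Aᵀ * A).PosSemidef) :
    sSup {t : ℝ | ∃ Q : Matrix (Fin n) (Fin n) ℝ, Qᵀ * Q = 1 ∧ t = (Q * A).trace} =
      hA.sqrt.trace := by
  classical
  set U : Matrix (Fin n) (Fin n) ℝ := hA.1.eigenvectorUnitary.1 with hU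
  set d : Fin n → ℝ := hA.1.eigenvalues with hd
  have hdnn : ∀ i, 0 ≤ d i := fun i => hA.eigenvalues_nonneg i
  have hstarU : star U = Uᵀ := by
    rw [Matrix.star_eq_conjTranspose, conjTranspose_eq_transpose_of_trivial]
  have hUtU : Uᵀ * U = 1 := by
    rw [← hstarU]; exact Unitary.coe_star_mul_self hA.1.eigenvectorUnitary
  have hUUt : U * Uᵀ = 1 := by
    rw [← hstarU]; exact Unitary.coe_mul_star_self hA.1.eigenvectorUnitary
  have hspec : Aᵀ * A = U * diagonal d * Uᵀ := by
    have h := hA.1.spectral_theorem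
    rw [Unitary.conjStarAlgAut_apply] at h
    rw [show (star U : Matrix (Fin n) (Fin n) ℝ) = Uᵀ from hstarU] at h
    exact h
  -- trace of sqrt
  have htr : hA.sqrt.trace = ∑ i, Real.sqrt (d i) := by
    have h1 : hA.sqrt = U * diagonal (fun i => Real.sqrt (d i)) * Uᵀ := by
      rw [show hA.sqrt = U * diagonal (RCLike.ofReal ∘ Real.sqrt ∘ d) * star U from rfl, hstarU]
      rfl
    rw [h1, Matrix.trace_mul_cycle, hUtU, one_mul, trace_diagonal]
  set B : Matrix (Fin n) (Fin n) ℝ := A * U with hB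
  have hBtB : Bᵀ * B = diagonal d := by
    have h1 : Bᵀ * B = Uᵀ * (Aᵀ * A) * U := by
      rw [hB, transpose_mul, Matrix.mul_assoc, ← Matrix.mul_assoc Aᵀ, ← Matrix.mul_assoc]
    rw [h1, hspec]
    simp only [Matrix.mul_assoc]
    rw [hUtU, mul_one, ← Matrix.mul_assoc, hUtU, one_mul]
  have hcol : ∀ i j, ∑ k, B k i * B k j = if i = j then d i else 0 := by
    intro i j
    have h := congrFun (congrFun hBtB i) j
    simpa [Matrix.mul_apply, Matrix.diagonal_apply] using h
  -- upper bound
  have hub : ∀ Q : Matrix (Fin n) (Fin n) ℝ, Qᵀ * Q = 1 →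
      (Q * A).trace ≤ ∑ i, Real.sqrt (d i) := by
    intro Q hQ
    have hQQt : Q * Qᵀ = 1 := mul_eq_one_comm.mp hQ
    set M : Matrix (Fin n) (Fin n) ℝ := Uᵀ * Q with hM
    have hMMt : M * Mᵀ = 1 := by
      rw [hM, transpose_mul, transpose_transpose, Matrix.mul_assoc, ← Matrix.mul_assoc Q,
        hQQt, one_mul, hUtU]
    have hrow : ∀ i, ∑ k, M i k ^ 2 = 1 := by
      intro i
      have h := congrFun (congrFun hMMt i) i
      simpa [Matrix.mul_apply, sq] using h
    have htrMB : (M * B).trace = (Q * A).trace := by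
      rw [hM, hB, Matrix.mul_assoc, Matrix.trace_mul_comm, Matrix.mul_assoc, Matrix.mul_assoc,
        hUUt, mul_one]
    have htrQ : (Q * A).trace = ∑ i, ∑ k, M i k * B k i := by
      rw [← htrMB, Matrix.trace]
      simp [Matrix.mul_apply, Matrix.diag]
    rw [htrQ]
    refine Finset.sum_le_sum fun i _ => ?_
    have hCS := Finset.sum_mul_sq_le_sq_mul_sq Finset.univ (fun k => M i k) (fun k => B k i)
    rw [hrow i, one_mul] at hCS
    have h2 : ∑ k, B k i ^ 2 = d i := by
      have h := hcol i i
      rw [if_pos rfl] at h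
      simpa [sq] using h
    rw [h2] at hCS
    calc ∑ k, M i k * B k i ≤ |∑ k, M i k * B k i| := le_abs_self _
      _ = Real.sqrt ((∑ k, M i k * B k i) ^ 2) := (Real.sqrt_sq_eq_abs _).symm
      _ ≤ Real.sqrt (d i) := Real.sqrt_le_sqrt hCS
  -- lower bound : construct the optimal Q
  set b : Fin n → EuclideanSpace ℝ (Fin n) := fun i => WithLp.toLp 2 (fun k => B k i) with hb
  have hinner : ∀ i j, (inner ℝ (b i) (b j) : ℝ) = if i = j then d i else 0 := by
    intro i j
    rw [← hcol i j]
    simp [hb, PiLp.inner_apply, RCLike.inner_apply, mul_comm]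
  set s : Set (Fin n) := {i | d i ≠ 0} with hs
  set v : Fin n → EuclideanSpace ℝ (Fin n) :=
    fun i => (Real.sqrt (d i))⁻¹ • b i with hv
  have hvortho : Orthonormal ℝ (s.restrict v) := by
    rw [orthonormal_iff_ite]
    rintro ⟨i, hi⟩ ⟨j, hj⟩
    have hdi : 0 < d i := lt_of_le_of_ne (hdnn i) (Ne.symm hi)
    by_cases hij : i = j
    · subst hij
      rw [if_pos rfl]
      simp only [Set.restrict_apply, Set.restrict, hv]
      rw [real_inner_smul_left, real_inner_smul_right, hinner i i, if_pos rfl]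
      have hsq : Real.sqrt (d i) * Real.sqrt (d i) = d i := Real.mul_self_sqrt (hdnn i)
      field_simp
      rw [sq, hsq]
    · rw [if_neg (fun h => hij (Subtype.ext_iff.mp h))]
      simp only [Set.restrict_apply, Set.restrict, hv]
      rw [real_inner_smul_left, real_inner_smul_right, hinner i j, if_neg hij]
      ring
  have hcard : Module.finrank ℝ (EuclideanSpace ℝ (Fin n)) = Fintype.card (Fin n) := by
    simp [finrank_euclideanSpace]
  obtain ⟨c, hc⟩ := hvortho.exists_orthonormalBasis_extension_of_card_eq hcard
  set C : Matrix (Fin n) (Fin n) ℝ := fun k i => c i k with hC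
  have hCtC : Cᵀ * C = 1 := by
    ext i j
    have h := orthonormal_iff_ite.mp c.orthonormal i j
    simp only [PiLp.inner_apply, RCLike.inner_apply, starRingEnd_apply, star_trivial] at h
    rw [Matrix.mul_apply, Matrix.one_apply, ← h]
    exact Finset.sum_congr rfl fun x _ => mul_comm _ _
  set Q₀ : Matrix (Fin n) (Fin n) ℝ := U * Cᵀ with hQ₀
  have hQ₀orth : Q₀ᵀ * Q₀ = 1 := by
    rw [hQ₀, transpose_mul, transpose_transpose, Matrix.mul_assoc, ← Matrix.mul_assoc Uᵀ,
      hUtU, one_mul]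
    exact mul_eq_one_comm.mp hCtC
  have heq : (Q₀ * A).trace = ∑ i, Real.sqrt (d i) := by
    have h1 : (Q₀ * A).trace = (B * Cᵀ).trace := by
      rw [hQ₀, Matrix.trace_mul_cycle, hB, Matrix.mul_assoc]
    have h2 : (B * Cᵀ).trace = ∑ j, (inner ℝ (c j) (b j) : ℝ) := by
      rw [Matrix.trace]
      simp only [Matrix.diag, Matrix.mul_apply, Matrix.transpose_apply]
      rw [Finset.sum_comm]
      refine Finset.sum_congr rfl fun j _ => ?_
      simp [PiLp.inner_apply, RCLike.inner_apply, hC, hb, mul_comm]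
    rw [h1, h2]
    refine Finset.sum_congr rfl fun j _ => ?_
    by_cases hj : d j = 0
    · have hbj : b j = 0 := by
        have h0 : (inner ℝ (b j) (b j) : ℝ) = 0 := by rw [hinner j j]; simp [hj]
        exact inner_self_eq_zero.mp h0
      rw [hbj, inner_zero_right, hj, Real.sqrt_zero]
    · have hcj : c j = v j := hc j hj
      have hdj : 0 < d j := lt_of_le_of_ne (hdnn j) (Ne.symm hj)
      rw [hcj, hv]
      simp only
      rw [real_inner_smul_left, hinner j j, if_pos rfl,
        inv_mul_eq_iff_eq_mul₀ (ne_of_gt (Real.sqrt_pos.mpr hdj))]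
      exact (Real.mul_self_sqrt (hdnn j)).symm
  rw [htr]
  refine IsGreatest.csSup_eq ⟨⟨Q₀, hQ₀orth, heq.symm⟩, ?_⟩
  rintro t ⟨Q, hQ, rfl⟩
  exact hub Q hQ
end

section
/- For every σ ∈ [0, s(b)] one has ψ'(σ)/ψ(σ)² = φ'(r(σ))/φ(r(σ)), and the derivative of σ ↦ ψ'(σ)/ψ(σ)² at σ equals φ(r(σ)) · (log ∘ φ)''(r(σ)). Consequently, σ ↦ ψ'(σ)/ψ(σ)² is nonincreasing on [0, s(b)] if and only if (log ∘ φ)'' ≤ 0 on [a,b] (i.e. φ is log-concave). -/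
open Set Topology Filter

open MeasureTheory intervalIntegral Filter Topology in
private lemma ftc_icc (a b : ℝ) (hab : a < b) (f : ℝ → ℝ) (hf : ContinuousOn f (Icc a b))
    (x : ℝ) (hx : x ∈ Icc a b) :
    HasDerivWithinAt (fun u => ∫ t in a..u, f t) (f x) (Icc a b) x := by
  have hint : IntervalIntegrable f volume a b := by
    apply ContinuousOn.intervalIntegrable; rwa [uIcc_of_le hab.le]
  have hmeasIcc : AEStronglyMeasurable f (volume.restrict (Icc a b)) :=
    hf.aestronglyMeasurable measurableSet_Icc
  have hintx : IntervalIntegrable f volume a x :=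
    hint.mono_set (uIcc_subset_uIcc left_mem_uIcc (by rw [uIcc_of_le hab.le]; exact hx))
  rcases eq_or_lt_of_le hx.1 with h | hax
  · have h1 : Icc a b ∈ 𝓝[>] x := by
      rw [← h]; exact Icc_mem_nhdsGT_of_mem ⟨le_rfl, hab⟩
    have := integral_hasDerivWithinAt_right (s := Ici x) (t := Ioi x) hintx
      ⟨Icc a b, h1, hmeasIcc⟩ ((hf x hx).mono_of_mem_nhdsWithin h1)
    rw [← h] at this ⊢
    exact this.mono Icc_subset_Ici_self
  rcases eq_or_lt_of_le hx.2 with h | hxb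
  · have h1 : Icc a b ∈ 𝓝[≤] x := by
      rw [h]; exact Icc_mem_nhdsLE_of_mem ⟨hab, le_rfl⟩
    have := integral_hasDerivWithinAt_right (s := Iic x) (t := Iic x) hintx
      ⟨Icc a b, h1, hmeasIcc⟩ ((hf x hx).mono_of_mem_nhdsWithin h1)
    rw [h] at this ⊢
    exact this.mono Icc_subset_Iic_self
  · have h1 : Icc a b ∈ 𝓝 x := Icc_mem_nhds hax hxb
    exact (integral_hasDerivAt_right hintx ⟨Icc a b, h1, hmeasIcc⟩
      (hf.continuousAt h1)).hasDerivWithinAt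

/-- Let `a < b`, `φ : [a,b] → ℝ` be positive and twice continuously
differentiable (with first derivative `φ'`, and with `lφ'`, `lφ''` the first and second
derivatives of `log ∘ φ`, `lφ''` continuous).  Let `s r = ∫_a^r φ(t)⁻¹ dt`, let `r` be the
inverse of `s : [a,b] → [0, s b]`, and let `ψ σ = φ (r σ)` with derivative `ψ'`.  Then for
every `σ ∈ [0, s b]` one has `ψ'(σ)/ψ(σ)² = φ'(r σ)/φ(r σ)`, the derivative of
`σ ↦ ψ'(σ)/ψ(σ)²` at `σ` equals `φ(r σ) * (log ∘ φ)''(r σ)`, and `σ ↦ ψ'(σ)/ψ(σ)²` is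
nonincreasing on `[0, s b]` if and only if `(log ∘ φ)'' ≤ 0` on `[a,b]`. -/
theorem warping_logconcavity_reparam
    (a b : ℝ) (hab : a < b)
    (φ φ' lφ' lφ'' : ℝ → ℝ)
    (hφpos : ∀ t ∈ Icc a b, 0 < φ t)
    (hφd : ∀ t ∈ Icc a b, HasDerivWithinAt φ (φ' t) (Icc a b) t)
    (hlog1 : ∀ t ∈ Icc a b, HasDerivWithinAt (Real.log ∘ φ) (lφ' t) (Icc a b) t)
    (hlog2 : ∀ t ∈ Icc a b, HasDerivWithinAt lφ' (lφ'' t) (Icc a b) t)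
    (hlogc : ContinuousOn lφ'' (Icc a b))
    (s : ℝ → ℝ) (hs : ∀ x, s x = ∫ t in a..x, (φ t)⁻¹)
    (r : ℝ → ℝ)
    (hrmem : ∀ σ ∈ Icc 0 (s b), r σ ∈ Icc a b)
    (hrs : ∀ x ∈ Icc a b, r (s x) = x)
    (hsr : ∀ σ ∈ Icc 0 (s b), s (r σ) = σ)
    (ψ ψ' : ℝ → ℝ) (hψ : ∀ σ, ψ σ = φ (r σ))
    (hψd : ∀ σ ∈ Icc 0 (s b), HasDerivWithinAt ψ (ψ' σ) (Icc 0 (s b)) σ) :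
    (∀ σ ∈ Icc 0 (s b), ψ' σ / (ψ σ) ^ 2 = φ' (r σ) / φ (r σ)) ∧
    (∀ σ ∈ Icc 0 (s b),
      HasDerivWithinAt (fun τ => ψ' τ / (ψ τ) ^ 2)
        (φ (r σ) * lφ'' (r σ)) (Icc 0 (s b)) σ) ∧
    (AntitoneOn (fun τ => ψ' τ / (ψ τ) ^ 2) (Icc 0 (s b)) ↔
      ∀ t ∈ Icc a b, lφ'' t ≤ 0) := by
  have hφcont : ContinuousOn φ (Icc a b) := fun t ht => (hφd t ht).continuousWithinAt
  have hφne : ∀ t ∈ Icc a b, φ t ≠ 0 := fun t ht => (hφpos t ht).ne'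
  have hfcont : ContinuousOn (fun t => (φ t)⁻¹) (Icc a b) := hφcont.inv₀ hφne
  have hint : IntervalIntegrable (fun t => (φ t)⁻¹) MeasureTheory.volume a b := by
    apply ContinuousOn.intervalIntegrable; rwa [uIcc_of_le hab.le]
  have hintxy : ∀ x ∈ Icc a b, ∀ y ∈ Icc a b,
      IntervalIntegrable (fun t => (φ t)⁻¹) MeasureTheory.volume x y := by
    intro x hx y hy
    refine hint.mono_set (uIcc_subset_uIcc ?_ ?_) <;> rw [uIcc_of_le hab.le]
    exacts [hx, hy]
  have hs_sub : ∀ x ∈ Icc a b, ∀ y ∈ Icc a b, s y - s x = ∫ t in x..y, (φ t)⁻¹ := by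
    intro x hx y hy
    rw [hs, hs]
    rw [intervalIntegral.integral_interval_sub_left (hintxy a (left_mem_Icc.2 hab.le) y hy)
      (hintxy a (left_mem_Icc.2 hab.le) x hx)]
  have hs_mono : ∀ x ∈ Icc a b, ∀ y ∈ Icc a b, x < y → s x < s y := by
    intro x hx y hy hxy
    have h := hs_sub x hx y hy
    have hpos : 0 < ∫ t in x..y, (φ t)⁻¹ := by
      apply intervalIntegral.intervalIntegral_pos_of_pos_on (hintxy x hx y hy)
      · intro t ht
        exact inv_pos.2 (hφpos t ⟨hx.1.trans ht.1.le, ht.2.le.trans hy.2⟩)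
      · exact hxy
    linarith
  have hs_le : ∀ x ∈ Icc a b, ∀ y ∈ Icc a b, x ≤ y → s x ≤ s y := by
    intro x hx y hy h
    rcases h.lt_or_eq with h | h
    · exact (hs_mono x hx y hy h).le
    · rw [h]
  have hsa : s a = 0 := by rw [hs]; simp
  have haI : a ∈ Icc a b := left_mem_Icc.2 hab.le
  have hbI : b ∈ Icc a b := right_mem_Icc.2 hab.le
  have hsb_pos : 0 < s b := by
    have := hs_mono a haI b hbI hab; rwa [hsa] at this
  have hsmem : ∀ x ∈ Icc a b, s x ∈ Icc 0 (s b) := by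
    intro x hx
    constructor
    · rw [← hsa]; exact hs_le a haI x hx hx.1
    · exact hs_le x hx b hbI hx.2
  have hr_mono : ∀ σ ∈ Icc 0 (s b), ∀ τ ∈ Icc 0 (s b), σ < τ → r σ < r τ := by
    intro σ hσ τ hτ h
    by_contra hle
    push_neg at hle
    have := hs_le _ (hrmem τ hτ) _ (hrmem σ hσ) hle
    rw [hsr σ hσ, hsr τ hτ] at this
    exact absurd this (not_le.2 h)
  have hr_cont : ∀ σ ∈ Icc 0 (s b), ContinuousWithinAt r (Icc 0 (s b)) σ := by
    intro σ hσ
    rw [ContinuousWithinAt, tendsto_order]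
    constructor
    · intro y hy
      rcases lt_or_ge y a with hya | hya
      · filter_upwards [self_mem_nhdsWithin] with τ hτ
        exact hya.trans_le (hrmem τ hτ).1
      · have hyI : y ∈ Icc a b := ⟨hya, hy.le.trans (hrmem σ hσ).2⟩
        have hsy : s y < σ := by
          have := hs_mono y hyI _ (hrmem σ hσ) hy
          rwa [hsr σ hσ] at this
        filter_upwards [mem_nhdsWithin_of_mem_nhds (Ioi_mem_nhds hsy),
          self_mem_nhdsWithin] with τ h1 h2
        have := hr_mono _ (hsmem y hyI) _ h2 h1
        rwa [hrs y hyI] at this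
    · intro y hy
      rcases lt_or_ge b y with hby | hby
      · filter_upwards [self_mem_nhdsWithin] with τ hτ
        exact ((hrmem τ hτ).2).trans_lt hby
      · have hyI : y ∈ Icc a b := ⟨(hrmem σ hσ).1.trans hy.le, hby⟩
        have hsy : σ < s y := by
          have := hs_mono _ (hrmem σ hσ) y hyI hy
          rwa [hsr σ hσ] at this
        filter_upwards [mem_nhdsWithin_of_mem_nhds (Iio_mem_nhds hsy),
          self_mem_nhdsWithin] with τ h1 h2
        have := hr_mono _ h2 _ (hsmem y hyI) h1
        rwa [hrs y hyI] at this
  have hs_deriv : ∀ x ∈ Icc a b, HasDerivWithinAt s ((φ x)⁻¹) (Icc a b) x := by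
    intro x hx
    have hEq : s = fun u => ∫ t in a..u, (φ t)⁻¹ := funext hs
    rw [hEq]
    exact ftc_icc a b hab _ hfcont x hx
  have hud : UniqueDiffOn ℝ (Icc a b) := uniqueDiffOn_Icc hab
  have hψ'val : ∀ x ∈ Icc a b, ψ' (s x) = φ' x * φ x := by
    intro x hx
    have hsx := hsmem x hx
    have hcomp : HasDerivWithinAt (ψ ∘ s) (ψ' (s x) * (φ x)⁻¹) (Icc a b) x :=
      (hψd (s x) hsx).comp x (hs_deriv x hx) (fun y hy => hsmem y hy)
    have hφeq : HasDerivWithinAt φ (ψ' (s x) * (φ x)⁻¹) (Icc a b) x := by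
      apply hcomp.congr (fun y hy => ?_) (by simp [Function.comp, hψ, hrs x hx])
      simp [Function.comp, hψ, hrs y hy]
    have h1 := hφeq.derivWithin (hud x hx)
    have h2 := (hφd x hx).derivWithin (hud x hx)
    have h3 : ψ' (s x) * (φ x)⁻¹ = φ' x := by rw [← h1, h2]
    rw [← div_eq_mul_inv, div_eq_iff (hφne x hx)] at h3
    linarith
  have hlφ'val : ∀ x ∈ Icc a b, lφ' x = φ' x / φ x := by
    intro x hx
    have h1 : HasDerivWithinAt (Real.log ∘ φ) ((φ x)⁻¹ * φ' x) (Icc a b) x :=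
      (Real.hasDerivAt_log (hφne x hx)).comp_hasDerivWithinAt x (hφd x hx)
    have h2 := h1.derivWithin (hud x hx)
    have h3 := (hlog1 x hx).derivWithin (hud x hx)
    rw [← h3, h2]
    rw [inv_mul_eq_div]
  have hr_deriv : ∀ σ ∈ Icc 0 (s b), HasDerivWithinAt r (φ (r σ)) (Icc 0 (s b)) σ := by
    intro σ hσ
    have hx := hrmem σ hσ
    rw [hasDerivWithinAt_iff_tendsto_slope]
    have hslope_s : Filter.Tendsto (slope s (r σ)) (𝓝[Icc a b \ {r σ}] (r σ))
        (𝓝 ((φ (r σ))⁻¹)) := hasDerivWithinAt_iff_tendsto_slope.1 (hs_deriv _ hx)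
    have htr : Filter.Tendsto r (𝓝[Icc 0 (s b) \ {σ}] σ) (𝓝[Icc a b \ {r σ}] (r σ)) := by
      rw [tendsto_nhdsWithin_iff]
      constructor
      · exact ((hr_cont σ hσ)).mono_left (nhdsWithin_mono σ diff_subset)
      · filter_upwards [self_mem_nhdsWithin] with τ hτ
        refine ⟨hrmem τ hτ.1, fun h => hτ.2 ?_⟩
        have := congrArg s h
        rw [hsr τ hτ.1, hsr σ hσ] at this
        exact this
    have key := (hslope_s.comp htr).inv₀ (inv_ne_zero (hφne _ hx))
    rw [inv_inv] at key
    apply key.congr'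
    filter_upwards [self_mem_nhdsWithin] with τ hτ
    have h1 : s (r τ) = τ := hsr τ hτ.1
    have h2 : s (r σ) = σ := hsr σ hσ
    show (slope s (r σ) (r τ))⁻¹ = slope r σ τ
    rw [slope_def_field, slope_def_field, h1, h2, inv_div]
  have hψ'σ : ∀ σ ∈ Icc 0 (s b), ψ' σ = φ' (r σ) * φ (r σ) := by
    intro σ hσ
    have := hψ'val (r σ) (hrmem σ hσ)
    rwa [hsr σ hσ] at this
  have hG1 : ∀ σ ∈ Icc 0 (s b), ψ' σ / (ψ σ) ^ 2 = φ' (r σ) / φ (r σ) := by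
    intro σ hσ
    rw [hψ'σ σ hσ, hψ]
    have h := hφne _ (hrmem σ hσ)
    field_simp
  have hG2 : ∀ σ ∈ Icc 0 (s b), HasDerivWithinAt (fun τ => ψ' τ / (ψ τ) ^ 2)
      (φ (r σ) * lφ'' (r σ)) (Icc 0 (s b)) σ := by
    intro σ hσ
    have hcomp : HasDerivWithinAt (lφ' ∘ r) (lφ'' (r σ) * φ (r σ)) (Icc 0 (s b)) σ :=
      (hlog2 _ (hrmem σ hσ)).comp σ (hr_deriv σ hσ) (fun τ hτ => hrmem τ hτ)
    have heq : ∀ τ ∈ Icc 0 (s b), ψ' τ / (ψ τ) ^ 2 = (lφ' ∘ r) τ := by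
      intro τ hτ
      rw [hG1 τ hτ, Function.comp_apply, hlφ'val _ (hrmem τ hτ)]
    rw [mul_comm]
    exact hcomp.congr heq (heq σ hσ)
  refine ⟨hG1, hG2, ?_, ?_⟩
  · -- antitone → lφ'' ≤ 0
    intro hA t ht
    have hσ : s t ∈ Icc 0 (s b) := hsmem t ht
    have hrt : r (s t) = t := hrs t ht
    have hd := hG2 (s t) hσ
    rw [hrt] at hd
    have hne : (𝓝[Icc 0 (s b) \ {s t}] (s t)).NeBot := by
      rcases lt_or_eq_of_le hσ.2 with h | h
      · have h1 : Ioc (s t) (s b) ⊆ Icc 0 (s b) \ {s t} :=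
          fun x hx => ⟨⟨hσ.1.trans hx.1.le, hx.2⟩, ne_of_gt hx.1⟩
        exact (left_nhdsWithin_Ioc_neBot h).mono (nhdsWithin_mono _ h1)
      · have h0 : 0 < s t := by rw [h]; exact hsb_pos
        have h1 : Ico 0 (s t) ⊆ Icc 0 (s b) \ {s t} :=
          fun x hx => ⟨⟨hx.1, hx.2.le.trans hσ.2⟩, ne_of_lt hx.2⟩
        exact (right_nhdsWithin_Ico_neBot h0).mono (nhdsWithin_mono _ h1)
    have hslope := hasDerivWithinAt_iff_tendsto_slope.1 hd
    have hle : φ t * lφ'' t ≤ 0 := by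
      refine le_of_tendsto hslope ?_
      filter_upwards [self_mem_nhdsWithin] with τ hτ
      rw [slope_def_field]
      rcases lt_or_gt_of_ne (hτ.2 : τ ≠ s t) with h | h
      · apply div_nonpos_of_nonneg_of_nonpos
        · have := hA hτ.1 hσ h.le
          linarith
        · linarith
      · apply div_nonpos_of_nonpos_of_nonneg
        · have := hA hσ hτ.1 h.le
          linarith
        · linarith
    nlinarith [hφpos t ht]
  · -- lφ'' ≤ 0 → antitone
    intro hN
    apply antitoneOn_of_hasDerivWithinAt_nonpos (convex_Icc 0 (s b))
      (f' := fun σ => φ (r σ) * lφ'' (r σ))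
    · exact fun σ hσ => (hG2 σ hσ).continuousWithinAt
    · exact fun σ hσ => (hG2 σ (interior_subset hσ)).mono interior_subset
    · intro σ hσ
      have hm := hrmem σ (interior_subset hσ)
      exact mul_nonpos_of_nonneg_of_nonpos (hφpos _ hm).le (hN _ hm)
end
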